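/- Let R be a ring in which the zero ideal is prime, and suppose the Jacobson radical of R is zero and the intersection I of all nonzero prime ideals of R is nonzero. Then R is a left primitive ring. -/

import Mathlib

universe u

/-- An ideal is two-sided if it is closed under right multiplication (ideals in Mathlib are
left ideals). -/
def Ideal.IsTwoSided' {R : Type u} [Ring R] (P : Ideal R) : Prop :=
  ∀ a ∈ P, ∀ r : R, a * r ∈ P

/-- A (two-sided) ideal is prime in the noncommutative sense. -/
def Ideal.IsPrimeNC {R : Type u} [Ring R] (P : Ideal R) : Prop :=
  P ≠ ⊤ ∧ ∀ a b : R, (∀ r : R, a * r * b ∈ P) → a ∈ P ∨ b ∈ P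

/-- Let `R` be a ring in which the zero ideal is prime, the Jacobson radical of `R` is zero,
and the intersection of all nonzero prime (two-sided) ideals of `R` is nonzero.  Then `R` is a
left primitive ring, i.e. it admits a faithful simple left module. -/
theorem primitive_of_jacobson_bot_of_inf_primes_ne_bot {R : Type u} [Ring R]
    (hprime : Ideal.IsPrimeNC (⊥ : Ideal R))
    (hjac : Ideal.jacobson (⊥ : Ideal R) = ⊥)
    (hI : sInf {Q : Ideal R | Q.IsTwoSided' ∧ Q.IsPrimeNC ∧ Q ≠ ⊥} ≠ ⊥) :
    ∃ (M : Type u) (_ : AddCommGroup M) (_ : Module R M),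
      IsSimpleModule R M ∧ ∀ r : R, (∀ m : M, r • m = 0) → r = 0 := by
  -- pick a nonzero element x of the intersection I
  obtain ⟨x, hxI, hx0⟩ : ∃ x, x ∈ sInf {Q : Ideal R | Q.IsTwoSided' ∧ Q.IsPrimeNC ∧ Q ≠ ⊥} ∧ x ≠ 0 := by
    by_contra h
    push_neg at h
    exact hI (le_antisymm (fun y hy => (Submodule.mem_bot R).2 (h y hy)) bot_le)
  -- x is not in the Jacobson radical, so there's a maximal left ideal m not containing x
  have hxJ : x ∉ Ideal.jacobson (⊥ : Ideal R) := by
    rw [hjac]; simpa using hx0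
  rw [Ideal.jacobson, Submodule.mem_sInf] at hxJ
  push_neg at hxJ
  obtain ⟨m, ⟨-, hmax⟩, hxm⟩ := hxJ
  refine ⟨R ⧸ m, inferInstance, inferInstance, ?_, ?_⟩
  · rwa [isSimpleModule_iff_isCoatom, ← Ideal.isMaximal_def]
  · -- faithfulness
    intro r hr
    -- Ann := {r | ∀ y, r * y ∈ m}; here hr gives r * y ∈ m for all y
    have hann : ∀ s : R, (∀ y : R, s * y ∈ m) ↔ ∀ mm : R ⧸ m, s • mm = 0 := by
      intro s
      constructor
      · intro h mm
        obtain ⟨y, rfl⟩ := Submodule.Quotient.mk_surjective m mm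
        rw [← Submodule.Quotient.mk_smul, Submodule.Quotient.mk_eq_zero]
        exact h y
      · intro h y
        have := h (Submodule.Quotient.mk y)
        rwa [← Submodule.Quotient.mk_smul, Submodule.Quotient.mk_eq_zero] at this
    by_contra hr0
    -- the annihilator ideal
    set A : Ideal R := { carrier := {s | ∀ y : R, s * y ∈ m}
                         add_mem' := fun {a b} ha hb y => by
                           rw [add_mul]; exact m.add_mem (ha y) (hb y)
                         zero_mem' := fun y => by rw [zero_mul]; exact m.zero_mem
                         smul_mem' := fun c a ha y => by
                           rw [smul_eq_mul, mul_assoc]; exact m.smul_mem c (ha y) } with hA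
    have hmem : ∀ s, s ∈ A ↔ ∀ y : R, s * y ∈ m := fun s => Iff.rfl
    have hAle : A ≤ m := fun s hs => by simpa using (hmem s).1 hs 1
    have hAne : A ≠ ⊥ := by
      intro hbot
      exact hr0 (by rw [← Submodule.mem_bot (R := R), ← hbot]; exact fun y => (hann r).2 hr y)
    have hts : A.IsTwoSided' := by
      intro a ha t y
      rw [mul_assoc]; exact ha (t * y)
    have hAprime : A.IsPrimeNC := by
      constructor
      · intro htop
        have : (1 : R) ∈ A := htop ▸ trivial
        have := (hmem 1).1 this 1
        simp at this
        exact (Ideal.IsMaximal.ne_top hmax) ((Ideal.eq_top_iff_one m).2 this)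
      · intro a b hab
        by_contra hcon
        push_neg at hcon
        obtain ⟨ha, hb⟩ := hcon
        rw [hmem] at ha hb
        push_neg at ha hb
        obtain ⟨z, hz⟩ := ha
        obtain ⟨y, hy⟩ := hb
        -- M simple, b*y ≠ 0 in R/m generates, so ∃ t, t*(b*y) - z ∈ m
        have hsimple : IsSimpleModule R (R ⧸ m) := by
          rwa [isSimpleModule_iff_isCoatom, ← Ideal.isMaximal_def]
        have hby : (Submodule.Quotient.mk (b * y) : R ⧸ m) ≠ 0 := by
          rwa [Ne, Submodule.Quotient.mk_eq_zero]
        have hspan : Submodule.span R {(Submodule.Quotient.mk (b * y) : R ⧸ m)} = ⊤ := by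
          rcases hsimple.1.2 (Submodule.span R {(Submodule.Quotient.mk (b * y) : R ⧸ m)}) with h | h
          · exact absurd ((Submodule.mem_bot R).1
              (h ▸ Submodule.mem_span_singleton_self _)) hby
          · exact h
        have : (Submodule.Quotient.mk z : R ⧸ m) ∈ Submodule.span R {(Submodule.Quotient.mk (b * y) : R ⧸ m)} := by
          rw [hspan]; trivial
        obtain ⟨t, ht⟩ := Submodule.mem_span_singleton.1 this
        -- ht : t • mk (b*y) = mk z
        have hdiff : t * (b * y) - z ∈ m := by
          rw [← Submodule.Quotient.mk_eq_zero, Submodule.Quotient.mk_sub, ← ht,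
            ← Submodule.Quotient.mk_smul, smul_eq_mul, sub_self]
        have h1 : a * t * b * y ∈ m := (hmem _).1 (hab t) y
        have h2 : a * (t * (b * y) - z) ∈ m := m.smul_mem a hdiff
        have h3 : a * z ∈ m := by
          have : a * (t * (b * y)) - a * z ∈ m := by rwa [← mul_sub]
          have h4 : a * (t * (b * y)) ∈ m := by
            rw [show a * (t * (b * y)) = a * t * b * y by simp [mul_assoc]]
            exact h1
          have := m.sub_mem h4 this
          simpa using this
        exact hz h3
    have hIA : sInf {Q : Ideal R | Q.IsTwoSided' ∧ Q.IsPrimeNC ∧ Q ≠ ⊥} ≤ A :=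
      sInf_le ⟨hts, hAprime, hAne⟩
    exact hxm (hAle (hIA hxI))
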